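/- arXiv:1110.6832 — 3 statements merged into one kernel-verified Lean document; each statement's English description precedes it below -/
import Mathlib

section
/- For a submodular set function ρ: 2^N → ℝ on a finite ground set N, the convex closure coincides with the Lovász extension: ρ̃(x) = ρ̂(x) for every x ∈ [0,1]^N. Consequently the Lovász extension ρ̂ is a convex function on [0,1]^N. -/
open Finset MeasureTheory
open scoped Classical

/-- The Lovász extension `ρ̂(x) = ∫_0^1 ρ(x^θ) dθ` where `x^θ = {i : x i ≥ θ}`. -/
noncomputable def lovaszExt {N : Type} [Fintype N] [DecidableEq N]
    (ρ : Finset N → ℝ) (x : N → ℝ) : ℝ :=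
  ∫ θ in (0:ℝ)..1, ρ (Finset.univ.filter (fun i => θ ≤ x i))

/-- The convex closure `ρ̃(x)`: the minimum of `Σ_S α_S ρ(S)` over distributions
`α` on subsets with `Σ_S α_S = 1`, `α ≥ 0` and `Σ_{S ∋ i} α_S = x i` for all `i`. -/
noncomputable def convexClosure {N : Type} [Fintype N] [DecidableEq N]
    (ρ : Finset N → ℝ) (x : N → ℝ) : ℝ :=
  sInf { z : ℝ | ∃ α : Finset N → ℝ, (∀ S, 0 ≤ α S) ∧ (∑ S : Finset N, α S = 1) ∧
    (∀ i : N, ∑ S ∈ Finset.univ.filter (fun S : Finset N => i ∈ S), α S = x i) ∧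
    z = ∑ S : Finset N, α S * ρ S }

section Aux

variable {N : Type} [Fintype N] [DecidableEq N]

/-- Lower endpoint of the interval of levels `θ` for which the level set is `S`. -/
noncomputable def lovA (x : N → ℝ) (S : Finset N) : ℝ := Sᶜ.fold max 0 x

/-- Upper endpoint of the interval of levels `θ` for which the level set is `S`. -/
noncomputable def lovB (x : N → ℝ) (S : Finset N) : ℝ := S.fold min 1 x

/-- The natural "chain" distribution realizing the Lovász extension. -/
noncomputable def lovAlpha (x : N → ℝ) (S : Finset N) : ℝ :=
  (volume (Set.Ioc (lovA x S) (lovB x S))).toReal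

lemma mem_Ioc_lovAB (x : N → ℝ) (S : Finset N) (θ : ℝ) :
    θ ∈ Set.Ioc (lovA x S) (lovB x S) ↔
      θ ∈ Set.Ioc (0:ℝ) 1 ∧ Finset.univ.filter (fun i => θ ≤ x i) = S := by
  simp only [Set.mem_Ioc, lovA, lovB, Finset.fold_max_lt, Finset.le_fold_min,
    Finset.mem_compl]
  constructor
  · rintro ⟨⟨h0, hout⟩, h1, hin⟩
    refine ⟨⟨h0, h1⟩, ?_⟩
    ext i
    simp only [Finset.mem_filter, Finset.mem_univ, true_and]
    constructor
    · intro hθ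
      by_contra hiS
      exact absurd hθ (not_le.2 (hout i hiS))
    · exact hin i
  · rintro ⟨⟨h0, h1⟩, hS⟩
    have hmem : ∀ i, θ ≤ x i ↔ i ∈ S := by
      intro i
      rw [← hS]
      simp
    refine ⟨⟨h0, fun i hi => ?_⟩, h1, fun i hi => (hmem i).2 hi⟩
    exact not_le.1 (fun h => hi ((hmem i).1 h))

lemma Ioc_lovAB_subset (x : N → ℝ) (S : Finset N) :
    Set.Ioc (lovA x S) (lovB x S) ⊆ Set.Ioc (0:ℝ) 1 :=
  fun θ hθ => ((mem_Ioc_lovAB x S θ).1 hθ).1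

lemma lovAlpha_nonneg (x : N → ℝ) (S : Finset N) : 0 ≤ lovAlpha x S :=
  ENNReal.toReal_nonneg

/-- The master computation: for any weight `w`, `Σ_S w S · α_S` equals the
integral of `w` along the level sets. -/
lemma sum_mul_lovAlpha (x : N → ℝ) (w : Finset N → ℝ) :
    ∑ S : Finset N, w S * lovAlpha x S
      = ∫ θ in Set.Ioc (0:ℝ) 1, w (Finset.univ.filter (fun i => θ ≤ x i)) := by
  have h1 : ∀ S : Finset N, w S * lovAlpha x S
      = ∫ θ in Set.Ioc (0:ℝ) 1,
          (Set.Ioc (lovA x S) (lovB x S)).indicator (fun _ => w S) θ := by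
    intro S
    rw [setIntegral_indicator measurableSet_Ioc, setIntegral_const,
      Set.inter_eq_self_of_subset_right (Ioc_lovAB_subset x S), lovAlpha,
      smul_eq_mul, mul_comm, measureReal_def]
  rw [Finset.sum_congr rfl (fun S _ => h1 S), ← MeasureTheory.integral_finset_sum]
  · apply setIntegral_congr_fun measurableSet_Ioc
    intro θ hθ
    dsimp only
    rw [Finset.sum_eq_single (Finset.univ.filter fun i => θ ≤ x i)]
    · exact Set.indicator_of_mem ((mem_Ioc_lovAB x _ θ).2 ⟨hθ, rfl⟩) _
    · intro S _ hne
      exact Set.indicator_of_notMem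
        (fun hm => hne (((mem_Ioc_lovAB x S θ).1 hm).2.symm ▸ rfl)) _
    · intro h
      exact absurd (Finset.mem_univ _) h
  · intro S _
    exact (integrableOn_const measure_Ioc_lt_top.ne).indicator measurableSet_Ioc

lemma sum_lovAlpha (x : N → ℝ) : ∑ S : Finset N, lovAlpha x S = 1 := by
  have h := sum_mul_lovAlpha x (fun _ => (1:ℝ))
  simp only [one_mul] at h
  rw [h, setIntegral_const, Real.volume_real_Ioc_of_le zero_le_one, smul_eq_mul, mul_one]
  norm_num

lemma marginal_lovAlpha (x : N → ℝ) (hx : ∀ i, x i ∈ Set.Icc (0:ℝ) 1) (i : N) :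
    ∑ S ∈ Finset.univ.filter (fun S : Finset N => i ∈ S), lovAlpha x S = x i := by
  have h := sum_mul_lovAlpha x (fun S => if i ∈ S then (1:ℝ) else 0)
  simp only [ite_mul, one_mul, zero_mul] at h
  rw [Finset.sum_filter]
  rw [h]
  have h2 : ∀ θ ∈ Set.Ioc (0:ℝ) 1,
      (if i ∈ Finset.univ.filter (fun j => θ ≤ x j) then (1:ℝ) else 0)
        = (Set.Ioc (0:ℝ) (x i)).indicator (fun _ => (1:ℝ)) θ := by
    intro θ hθ
    by_cases hc : θ ≤ x i
    · rw [if_pos (by simp [hc]), Set.indicator_of_mem (Set.mem_Ioc.2 ⟨(Set.mem_Ioc.1 hθ).1, hc⟩)]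
    · rw [if_neg (by simp [hc]), Set.indicator_of_notMem (fun hm => hc (Set.mem_Ioc.1 hm).2)]
  rw [setIntegral_congr_fun measurableSet_Ioc h2,
    setIntegral_indicator measurableSet_Ioc,
    Set.inter_eq_self_of_subset_right (Set.Ioc_subset_Ioc le_rfl (hx i).2),
    setIntegral_const, Real.volume_real_Ioc_of_le (hx i).1, smul_eq_mul, mul_one, sub_zero]

lemma lovaszExt_eq_sum (ρ : Finset N → ℝ) (x : N → ℝ) :
    lovaszExt ρ x = ∑ S : Finset N, lovAlpha x S * ρ S := by
  rw [lovaszExt, intervalIntegral.integral_of_le zero_le_one, ← sum_mul_lovAlpha x ρ]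
  exact Finset.sum_congr rfl fun S _ => mul_comm _ _

/-- The greedy vector associated to an ordering of `N` by decreasing `x`-value:
it certifies the lower bound and is tight on level sets of `x`. -/
lemma exists_greedy (ρ : Finset N → ℝ)
    (hsub : ∀ A B : Finset N, ρ (A ∪ B) + ρ (A ∩ B) ≤ ρ A + ρ B) (x : N → ℝ) :
    ∃ y : N → ℝ, (∀ S : Finset N, ρ ∅ + ∑ i ∈ S, y i ≤ ρ S) ∧
      (∀ θ : ℝ, ρ ∅ + ∑ i ∈ Finset.univ.filter (fun i => θ ≤ x i), y i
        = ρ (Finset.univ.filter (fun i => θ ≤ x i))) := by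
  classical
  set n := Fintype.card N with hn
  let m0 : Fin n ≃ N := (Fintype.equivFin N).symm
  let f : Fin n → ℝ := fun k => -(x (m0 k))
  let em : Fin n ≃ N := (Tuple.sort f).trans m0
  have hmono : Monotone (f ∘ Tuple.sort f) := Tuple.monotone_sort f
  let idx : N → ℕ := fun i => (em.symm i : ℕ)
  have hidx_lt : ∀ i, idx i < n := fun i => (em.symm i).2
  have hidx_inj : Function.Injective idx := fun i j h =>
    em.symm.injective (Fin.ext h)
  have hanti : ∀ i i', idx i ≤ idx i' → x i' ≤ x i := by
    intro i i' h
    have h' : em.symm i ≤ em.symm i' := h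
    have := hmono h'
    simp only [Function.comp_apply] at this
    have e1 : m0 (Tuple.sort f (em.symm i)) = i := em.apply_symm_apply i
    have e2 : m0 (Tuple.sort f (em.symm i')) = i' := em.apply_symm_apply i'
    simp only [f, e1, e2, neg_le_neg_iff] at this
    linarith
  set C : ℕ → Finset N := fun k => Finset.univ.filter (fun i => idx i < k) with hC
  have hC0 : C 0 = ∅ := by
    ext i; simp [hC]
  have hCn : C n = Finset.univ := by
    ext i; simp [hC, hidx_lt i]
  have hCins : ∀ i : N, C (idx i + 1) = insert i (C (idx i)) := by
    intro i
    ext i'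
    simp only [hC, Finset.mem_filter, Finset.mem_univ, true_and, Finset.mem_insert,
      Nat.lt_succ_iff]
    constructor
    · intro h
      rcases lt_or_eq_of_le h with h | h
      · exact Or.inr h
      · exact Or.inl (hidx_inj h)
    · rintro (rfl | h)
      · exact le_rfl
      · exact h.le
  have hreindex : ∀ h : ℕ → ℝ, ∑ i : N, h (idx i) = ∑ j ∈ Finset.range n, h j := by
    intro h
    rw [← Fin.sum_univ_eq_sum_range]
    exact Fintype.sum_equiv em.symm _ _ (fun i => rfl)
  have htel : ∀ S : Finset N,
      ∑ i ∈ S, (ρ (S ∩ C (idx i + 1)) - ρ (S ∩ C (idx i))) = ρ S - ρ ∅ := by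
    intro S
    rw [Finset.sum_subset (Finset.subset_univ S) (fun i _ hi => by
      rw [hCins i, Finset.inter_insert_of_notMem hi, sub_self])]
    rw [show (fun i => ρ (S ∩ C (idx i + 1)) - ρ (S ∩ C (idx i)))
        = (fun i => (fun k => ρ (S ∩ C (k + 1)) - ρ (S ∩ C k)) (idx i)) from rfl,
      hreindex (fun k => ρ (S ∩ C (k + 1)) - ρ (S ∩ C k)),
      Finset.sum_range_sub (fun k => ρ (S ∩ C k)), hCn, hC0,
      Finset.inter_univ, Finset.inter_empty]
  refine ⟨fun i => ρ (C (idx i + 1)) - ρ (C (idx i)), ?_, ?_⟩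
  · intro S
    have hle : ∀ i ∈ S, ρ (C (idx i + 1)) - ρ (C (idx i))
        ≤ ρ (S ∩ C (idx i + 1)) - ρ (S ∩ C (idx i)) := by
      intro i hi
      have h := hsub (S ∩ C (idx i + 1)) (C (idx i))
      have hiC : i ∉ C (idx i) := by simp [hC]
      have hu : (S ∩ C (idx i + 1)) ∪ C (idx i) = C (idx i + 1) := by
        rw [hCins i, Finset.inter_insert_of_mem hi]
        ext i'
        simp only [Finset.mem_union, Finset.mem_insert, Finset.mem_inter]
        constructor
        · rintro ((rfl | ⟨_, h'⟩) | h')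
          · exact Or.inl rfl
          · exact Or.inr h'
          · exact Or.inr h'
        · rintro (rfl | h')
          · exact Or.inl (Or.inl rfl)
          · exact Or.inr h'
      have hv : (S ∩ C (idx i + 1)) ∩ C (idx i) = S ∩ C (idx i) := by
        rw [hCins i, Finset.inter_insert_of_mem hi]
        ext i'
        simp only [Finset.mem_inter, Finset.mem_insert]
        constructor
        · rintro ⟨_ | ⟨hS, _⟩, hCk⟩
          · exact absurd hCk (by subst ‹i' = i›; exact hiC)
          · exact ⟨hS, hCk⟩
        · rintro ⟨hS, hCk⟩
          exact ⟨Or.inr ⟨hS, hCk⟩, hCk⟩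
      rw [hu, hv] at h
      linarith
    have := Finset.sum_le_sum hle
    rw [htel S] at this
    linarith
  · intro θ
    set S := Finset.univ.filter (fun i => θ ≤ x i) with hSdef
    have hdc : ∀ i i', idx i ≤ idx i' → i' ∈ S → i ∈ S := by
      intro i i' h hi'
      simp only [hSdef, Finset.mem_filter, Finset.mem_univ, true_and] at hi' ⊢
      exact le_trans hi' (hanti i i' h)
    have heq : ∀ i ∈ S, ρ (S ∩ C (idx i + 1)) - ρ (S ∩ C (idx i))
        = ρ (C (idx i + 1)) - ρ (C (idx i)) := by
      intro i hi
      have hsub1 : C (idx i + 1) ⊆ S := by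
        intro i' hi'
        simp only [hC, Finset.mem_filter, Finset.mem_univ, true_and,
          Nat.lt_succ_iff] at hi'
        exact hdc i' i hi' hi
      have hsub2 : C (idx i) ⊆ S := by
        intro i' hi'
        refine hsub1 ?_
        simp only [hC, Finset.mem_filter, Finset.mem_univ, true_and] at hi' ⊢
        omega
      rw [Finset.inter_eq_right.2 hsub1, Finset.inter_eq_right.2 hsub2]
    have h1 := htel S
    rw [Finset.sum_congr rfl heq] at h1
    linarith

lemma swap_sum (y : N → ℝ) (β : Finset N → ℝ) :
    ∑ S : Finset N, β S * ∑ i ∈ S, y i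
      = ∑ i : N, y i * ∑ S ∈ Finset.univ.filter (fun S : Finset N => i ∈ S), β S := by
  simp_rw [Finset.mul_sum]
  calc ∑ S : Finset N, ∑ i ∈ S, β S * y i
      = ∑ S : Finset N, ∑ i : N, if i ∈ S then β S * y i else 0 := by
        refine Finset.sum_congr rfl fun S _ => ?_
        rw [Finset.sum_ite_mem, Finset.univ_inter]
    _ = ∑ i : N, ∑ S : Finset N, if i ∈ S then β S * y i else 0 := Finset.sum_comm
    _ = ∑ i : N, ∑ S ∈ Finset.univ.filter (fun S : Finset N => i ∈ S), β S * y i := by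
        refine Finset.sum_congr rfl fun i _ => (Finset.sum_filter _ _).symm
    _ = ∑ i : N, ∑ S ∈ Finset.univ.filter (fun S : Finset N => i ∈ S), y i * β S := by
        refine Finset.sum_congr rfl fun i _ => Finset.sum_congr rfl fun S _ => mul_comm _ _

/-- The central lemma: the chain distribution `lovAlpha` achieves the Lovász
extension, and every feasible distribution has value at least the Lovász
extension. -/
lemma key_lemma (ρ : Finset N → ℝ)
    (hsub : ∀ A B : Finset N, ρ (A ∪ B) + ρ (A ∩ B) ≤ ρ A + ρ B)
    (x : N → ℝ) (hx : ∀ i, x i ∈ Set.Icc (0:ℝ) 1) :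
    (lovaszExt ρ x = ∑ S : Finset N, lovAlpha x S * ρ S) ∧
    (∀ α : Finset N → ℝ, (∀ S, 0 ≤ α S) → (∑ S : Finset N, α S = 1) →
      (∀ i : N, ∑ S ∈ Finset.univ.filter (fun S : Finset N => i ∈ S), α S = x i) →
      lovaszExt ρ x ≤ ∑ S : Finset N, α S * ρ S) := by
  obtain ⟨y, hyle, hyeq⟩ := exists_greedy ρ hsub x
  -- common computation for any feasible β
  have hcomp : ∀ β : Finset N → ℝ, (∑ S : Finset N, β S = 1) →
      (∀ i : N, ∑ S ∈ Finset.univ.filter (fun S : Finset N => i ∈ S), β S = x i) →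
      ∑ S : Finset N, β S * (ρ ∅ + ∑ i ∈ S, y i) = ρ ∅ + ∑ i : N, y i * x i := by
    intro β hβ1 hβ2
    simp_rw [mul_add]
    rw [Finset.sum_add_distrib, ← Finset.sum_mul, hβ1, one_mul, swap_sum y β]
    congr 1
    exact Finset.sum_congr rfl fun i _ => by rw [hβ2 i]
  -- value identity for the chain distribution
  have hchain : ∑ S : Finset N, lovAlpha x S * ρ S
      = ∑ S : Finset N, lovAlpha x S * (ρ ∅ + ∑ i ∈ S, y i) := by
    refine Finset.sum_congr rfl fun S _ => ?_
    by_cases h0 : lovAlpha x S = 0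
    · rw [h0, zero_mul, zero_mul]
    · have hne : (Set.Ioc (lovA x S) (lovB x S)).Nonempty := by
        rw [Set.nonempty_Ioc]
        by_contra h
        exact h0 (by rw [lovAlpha, Set.Ioc_eq_empty (by exact h), measure_empty,
          ENNReal.toReal_zero])
      obtain ⟨θ, hθ⟩ := hne
      obtain ⟨_, hlev⟩ := (mem_Ioc_lovAB x S θ).1 hθ
      have := hyeq θ
      rw [hlev] at this
      rw [← this]
  have hval : lovaszExt ρ x = ρ ∅ + ∑ i : N, y i * x i := by
    rw [lovaszExt_eq_sum ρ x, hchain,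
      hcomp (lovAlpha x) (sum_lovAlpha x) (marginal_lovAlpha x hx)]
  refine ⟨lovaszExt_eq_sum ρ x, ?_⟩
  intro α hα0 hα1 hα2
  have hge : ∑ S : Finset N, α S * (ρ ∅ + ∑ i ∈ S, y i) ≤ ∑ S : Finset N, α S * ρ S :=
    Finset.sum_le_sum fun S _ => mul_le_mul_of_nonneg_left (hyle S) (hα0 S)
  rw [hcomp α hα1 hα2] at hge
  rw [hval]
  exact hge

end Aux

/-- For a submodular set function `ρ` on a finite ground set `N`,
the convex closure coincides with the Lovász extension on `[0,1]^N`; consequently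
the Lovász extension is convex on `[0,1]^N`. -/
theorem convexClosure_eq_lovaszExt_and_convex {N : Type} [Fintype N] [DecidableEq N]
    (ρ : Finset N → ℝ)
    (hsub : ∀ A B : Finset N, ρ (A ∪ B) + ρ (A ∩ B) ≤ ρ A + ρ B) :
    (∀ x : N → ℝ, (∀ i, x i ∈ Set.Icc (0:ℝ) 1) → convexClosure ρ x = lovaszExt ρ x) ∧
    ConvexOn ℝ { x : N → ℝ | ∀ i, x i ∈ Set.Icc (0:ℝ) 1 } (lovaszExt ρ) := by
  classical
  have hmem : ∀ x : N → ℝ, (∀ i, x i ∈ Set.Icc (0:ℝ) 1) →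
      lovaszExt ρ x ∈ { z : ℝ | ∃ α : Finset N → ℝ, (∀ S, 0 ≤ α S) ∧
        (∑ S : Finset N, α S = 1) ∧
        (∀ i : N, ∑ S ∈ Finset.univ.filter (fun S : Finset N => i ∈ S), α S = x i) ∧
        z = ∑ S : Finset N, α S * ρ S } := by
    intro x hx
    exact ⟨lovAlpha x, lovAlpha_nonneg x, sum_lovAlpha x, marginal_lovAlpha x hx,
      (key_lemma ρ hsub x hx).1⟩
  have hlb : ∀ x : N → ℝ, (∀ i, x i ∈ Set.Icc (0:ℝ) 1) →
      ∀ z ∈ { z : ℝ | ∃ α : Finset N → ℝ, (∀ S, 0 ≤ α S) ∧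
        (∑ S : Finset N, α S = 1) ∧
        (∀ i : N, ∑ S ∈ Finset.univ.filter (fun S : Finset N => i ∈ S), α S = x i) ∧
        z = ∑ S : Finset N, α S * ρ S }, lovaszExt ρ x ≤ z := by
    rintro x hx z ⟨α, h1, h2, h3, rfl⟩
    exact (key_lemma ρ hsub x hx).2 α h1 h2 h3
  have heq : ∀ x : N → ℝ, (∀ i, x i ∈ Set.Icc (0:ℝ) 1) →
      convexClosure ρ x = lovaszExt ρ x := by
    intro x hx
    refine le_antisymm (csInf_le ⟨lovaszExt ρ x, fun z hz => hlb x hx z hz⟩ (hmem x hx))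
      (le_csInf ⟨lovaszExt ρ x, hmem x hx⟩ (hlb x hx))
  refine ⟨heq, ?_, ?_⟩
  · intro x hx y hy a b ha hb hab i
    have := (convex_Icc (0:ℝ) 1) (hx i) (hy i) ha hb hab
    simpa using this
  · intro x hx y hy a b ha hb hab
    obtain ⟨αx, hx1, hx2, hx3, hx4⟩ := hmem x hx
    obtain ⟨αy, hy1, hy2, hy3, hy4⟩ := hmem y hy
    have hz : ∀ i, (a • x + b • y) i ∈ Set.Icc (0:ℝ) 1 := by
      intro i
      have := (convex_Icc (0:ℝ) 1) (hx i) (hy i) ha hb hab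
      simpa using this
    have hzi : ∀ i, (a • x + b • y) i = a * x i + b * y i := by
      intro i
      simp [Pi.add_apply, Pi.smul_apply, smul_eq_mul]
    -- the combination of the two optimal distributions is feasible for the midpoint
    have hmemz : a * lovaszExt ρ x + b * lovaszExt ρ y ∈
        { z : ℝ | ∃ α : Finset N → ℝ, (∀ S, 0 ≤ α S) ∧
          (∑ S : Finset N, α S = 1) ∧
          (∀ i : N, ∑ S ∈ Finset.univ.filter (fun S : Finset N => i ∈ S), α S
            = (a • x + b • y) i) ∧
          a * lovaszExt ρ x + b * lovaszExt ρ y = ∑ S : Finset N, α S * ρ S } := by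
      refine ⟨fun S => a * αx S + b * αy S, ?_, ?_, ?_, ?_⟩
      · intro S
        exact add_nonneg (mul_nonneg ha (hx1 S)) (mul_nonneg hb (hy1 S))
      · rw [Finset.sum_add_distrib, ← Finset.mul_sum, ← Finset.mul_sum, hx2, hy2]
        simpa using hab
      · intro i
        rw [Finset.sum_add_distrib, ← Finset.mul_sum, ← Finset.mul_sum, hx3 i, hy3 i,
          hzi i]
      · rw [hx4, hy4, Finset.mul_sum, Finset.mul_sum, ← Finset.sum_add_distrib]
        refine Finset.sum_congr rfl fun S _ => by ring
    have : convexClosure ρ (a • x + b • y) ≤ a * lovaszExt ρ x + b * lovaszExt ρ y :=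
      csInf_le ⟨lovaszExt ρ (a • x + b • y), fun z hz' => hlb _ hz z hz'⟩ hmemz
    rw [heq _ hz] at this
    simpa [smul_eq_mul] using this
end

section
/- There is a universal constant C such that for every finite metric space (V,d) with |V| = n ≥ 2 and every weight function w: V×V → ℝ≥0 there is a 1-Lipschitz map g: V → ℝ (|g(u)−g(v)| ≤ d(u,v) for all u,v) with Σ_{u,v∈V} w(u,v)·d(u,v) ≤ C·(log n)·Σ_{u,v∈V} w(u,v)·|g(u)−g(v)|. Moreover, if w is supported on at most k ≥ 2 pairs, then there is such a g with Σ_{u,v} w(u,v)·d(u,v) ≤ C·(log k)·Σ_{u,v} w(u,v)·|g(u)−g(v)|. -/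
open Finset
open scoped Classical

private lemma bern_sum {V : Type} [DecidableEq V] (X : Finset V) (p : ℝ) :
    ∑ S ∈ X.powerset, p ^ S.card * (1 - p) ^ (X.card - S.card) = 1 := by
  calc ∑ S ∈ X.powerset, p ^ S.card * (1 - p) ^ (X.card - S.card)
      = ∑ S ∈ X.powerset, (∏ _i ∈ S, p) * ∏ _i ∈ X \ S, (1 - p) := by
        refine Finset.sum_congr rfl fun S hS => ?_
        rw [Finset.prod_const, Finset.prod_const,
          Finset.card_sdiff_of_subset (Finset.mem_powerset.mp hS)]
    _ = ∏ _i ∈ X, (p + (1 - p)) := (Finset.prod_add _ _ _).symm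
    _ = 1 := by simp

private lemma bern_avoid {V : Type} [DecidableEq V] (X : Finset V) {C : Finset V} (hC : C ⊆ X)
    (p : ℝ) :
    ∑ S ∈ X.powerset.filter (fun S => S ∩ C = ∅),
        p ^ S.card * (1 - p) ^ (X.card - S.card) = (1 - p) ^ C.card := by
  have hset : X.powerset.filter (fun S => S ∩ C = ∅) = (X \ C).powerset := by
    ext S
    simp only [Finset.mem_filter, Finset.mem_powerset, Finset.subset_sdiff,
      ← Finset.disjoint_iff_inter_eq_empty]
  have hCX : C.card ≤ X.card := Finset.card_le_card hC
  have hXC : (X \ C).card = X.card - C.card := Finset.card_sdiff_of_subset hC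
  rw [hset]
  have h2 : ∀ S ∈ (X \ C).powerset, p ^ S.card * (1 - p) ^ (X.card - S.card)
      = (1 - p) ^ C.card * (p ^ S.card * (1 - p) ^ ((X \ C).card - S.card)) := by
    intro S hS
    have hS' : S.card ≤ (X \ C).card := Finset.card_le_card (Finset.mem_powerset.mp hS)
    have : X.card - S.card = C.card + ((X \ C).card - S.card) := by omega
    rw [this, pow_add]; ring
  rw [Finset.sum_congr rfl h2, ← Finset.mul_sum, bern_sum, mul_one]

private lemma bern_event {V : Type} [DecidableEq V] (X : Finset V) {A B : Finset V}
    (hA : A ⊆ X) (hB : B ⊆ X) (hAB : Disjoint A B) (p : ℝ) :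
    (1 - p) ^ A.card - (1 - p) ^ (A.card + B.card) ≤
      ∑ S ∈ X.powerset.filter (fun S => S ∩ A = ∅ ∧ (S ∩ B).Nonempty),
        p ^ S.card * (1 - p) ^ (X.card - S.card) := by
  have hsplit :
      ∑ S ∈ X.powerset.filter (fun S => S ∩ A = ∅),
          p ^ S.card * (1 - p) ^ (X.card - S.card)
      = (∑ S ∈ X.powerset.filter (fun S => S ∩ A = ∅ ∧ S ∩ B = ∅),
          p ^ S.card * (1 - p) ^ (X.card - S.card))
        + ∑ S ∈ X.powerset.filter (fun S => S ∩ A = ∅ ∧ (S ∩ B).Nonempty),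
          p ^ S.card * (1 - p) ^ (X.card - S.card) := by
    rw [← Finset.sum_filter_add_sum_filter_not
      (X.powerset.filter (fun S => S ∩ A = ∅)) (fun S => S ∩ B = ∅), Finset.filter_filter,
      Finset.filter_filter]
    congr 2
    ext S
    simp [Finset.nonempty_iff_ne_empty]
  have h1 := bern_avoid X hA p
  have h2 : ∑ S ∈ X.powerset.filter (fun S => S ∩ A = ∅ ∧ S ∩ B = ∅),
      p ^ S.card * (1 - p) ^ (X.card - S.card) = (1 - p) ^ (A.card + B.card) := by
    have hfe : X.powerset.filter (fun S => S ∩ A = ∅ ∧ S ∩ B = ∅)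
        = X.powerset.filter (fun S => S ∩ (A ∪ B) = ∅) := by
      ext S
      simp [Finset.inter_union_distrib_left, Finset.union_eq_empty]
    rw [hfe, bern_avoid X (Finset.union_subset hA hB), Finset.card_union_of_disjoint hAB]
  linarith [hsplit, h1, h2]

private lemma exp_ineq1 {p : ℝ} (hp0 : 0 ≤ p) (hp1 : p ≤ 1/2) :
    Real.exp (-(2*p)) ≤ 1 - p := by
  have h := Real.add_one_le_exp (2*p)
  have hpos : (0:ℝ) < Real.exp (2*p) := Real.exp_pos _
  rw [Real.exp_neg, inv_le_iff_one_le_mul₀ hpos]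
  nlinarith

private lemma prob_lb {p : ℝ} (hp0 : 0 ≤ p) (hp1 : p ≤ 1/2) {m n : ℕ}
    (hm : (m:ℝ) * p ≤ 1) (hn : (1:ℝ)/2 ≤ (n:ℝ) * p) :
    (1:ℝ)/32 ≤ (1 - p) ^ m - (1 - p) ^ (m + n) := by
  have h1p : (0:ℝ) ≤ 1 - p := by linarith
  -- lower bound for (1-p)^m
  have e1 : Real.exp (-(2*p)) ^ m ≤ (1-p) ^ m :=
    pow_le_pow_left₀ (Real.exp_pos _).le (exp_ineq1 hp0 hp1) m
  have e1' : Real.exp (-(2*p)) ^ m = Real.exp (-(2*p) * m) := by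
    rw [← Real.exp_nat_mul]; ring_nf
  have e2 : Real.exp (-2) ≤ Real.exp (-(2*p) * m) := by
    apply Real.exp_le_exp.mpr; nlinarith
  have lbm : Real.exp (-2) ≤ (1-p) ^ m := by
    rw [← e1'] at e2; exact e2.trans e1
  -- upper bound for (1-p)^n
  have f1 : (1-p) ^ n ≤ Real.exp (-p) ^ n := by
    apply pow_le_pow_left₀ h1p; linarith [Real.add_one_le_exp (-p)]
  have f1' : Real.exp (-p) ^ n = Real.exp (-p * n) := by
    rw [← Real.exp_nat_mul]; ring_nf
  have f2 : Real.exp (-p * n) ≤ Real.exp (-(1/2)) := by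
    apply Real.exp_le_exp.mpr; nlinarith
  have ubn : (1-p) ^ n ≤ Real.exp (-(1/2)) := by
    calc (1-p)^n ≤ Real.exp (-p) ^ n := f1
      _ = Real.exp (-p * n) := f1'
      _ ≤ _ := f2
  -- numeric: exp(-2) ≥ 1/8, exp(-1/2) ≤ 3/4
  have he : Real.exp 1 < 2.7182818286 := Real.exp_one_lt_d9
  have he1 : (2:ℝ) ≤ Real.exp 1 := by linarith [Real.add_one_le_exp (1:ℝ)]
  have hx2 : Real.exp 2 < 8 := by
    have : Real.exp 2 = Real.exp 1 * Real.exp 1 := by rw [← Real.exp_add]; norm_num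
    nlinarith [Real.exp_pos (1:ℝ)]
  have hinv2 : (1:ℝ)/8 ≤ Real.exp (-2) := by
    rw [Real.exp_neg]
    rw [le_inv_comm₀ (by norm_num) (Real.exp_pos _)]
    linarith
  have hsq : Real.exp (-(1/2)) ≤ 3/4 := by
    have hE : Real.exp (-(1/2)) * Real.exp (-(1/2)) = Real.exp (-1) := by
      rw [← Real.exp_add]; norm_num
    have hE1 : Real.exp (-1) ≤ 1/2 := by
      rw [Real.exp_neg, inv_le_comm₀ (Real.exp_pos 1) (by norm_num)]
      linarith
    nlinarith [hE, hE1, mul_self_nonneg (Real.exp (-(1/2)) - 3/4)]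
  have key : (1:ℝ)/32 ≤ (1-p)^m * (1 - (1-p)^n) := by
    have h1 : (1:ℝ)/4 ≤ 1 - (1-p)^n := by linarith
    have h2 : (1:ℝ)/8 ≤ (1-p)^m := by linarith
    nlinarith [pow_nonneg h1p n]
  have : (1-p)^(m+n) = (1-p)^m * (1-p)^n := pow_add _ _ _
  nlinarith [pow_nonneg h1p m]

open Metric in
private lemma scale_bound {V : Type} [MetricSpace V] (X : Finset V)
    {a b : V} (j : ℕ) {r r' : ℝ} (hr' : 0 ≤ r') (hrr : r' < r)
    (hA : (X.filter (fun x => dist a x < r)).card < 2 ^ (j + 1))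
    (hB : 2 ^ j ≤ (X.filter (fun x => dist b x ≤ r')).card)
    (hsep : r + r' ≤ dist a b) :
    r - r' ≤ 32 * ∑ S ∈ X.powerset,
      ((2:ℝ)⁻¹ ^ (j + 1)) ^ S.card * (1 - (2:ℝ)⁻¹ ^ (j + 1)) ^ (X.card - S.card) *
        |infDist a (S : Set V) - infDist b (S : Set V)| := by
  classical
  set p : ℝ := (2:ℝ)⁻¹ ^ (j + 1) with hp
  have hp0 : 0 ≤ p := by positivity
  have hp1 : p ≤ 1/2 := by
    calc p ≤ (2:ℝ)⁻¹ ^ 1 := by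
            apply pow_le_pow_of_le_one (by norm_num) (by norm_num) (by omega)
      _ = 1/2 := by norm_num
  have h1p : 0 ≤ 1 - p := by linarith
  set A : Finset V := X.filter (fun x => dist a x < r) with hAdef
  set B : Finset V := X.filter (fun x => dist b x ≤ r') with hBdef
  have hAX : A ⊆ X := Finset.filter_subset _ _
  have hBX : B ⊆ X := Finset.filter_subset _ _
  have hdisj : Disjoint A B := by
    rw [Finset.disjoint_left]
    intro x hxA hxB
    rw [hAdef, Finset.mem_filter] at hxA
    rw [hBdef, Finset.mem_filter] at hxB
    have : dist a b < r + r' := by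
      calc dist a b ≤ dist a x + dist x b := dist_triangle _ _ _
        _ = dist a x + dist b x := by rw [dist_comm x b]
        _ < r + r' := by linarith [hxA.2, hxB.2]
    linarith
  -- probability of the good event
  have hprob : (1:ℝ)/32 ≤
      ∑ S ∈ X.powerset.filter (fun S => S ∩ A = ∅ ∧ (S ∩ B).Nonempty),
        p ^ S.card * (1 - p) ^ (X.card - S.card) := by
    refine le_trans ?_ (bern_event X hAX hBX hdisj p)
    refine prob_lb hp0 hp1 ?_ ?_
    · -- A.card * p ≤ 1
      have hc : (A.card : ℝ) ≤ 2 ^ (j+1) := by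
        have : A.card ≤ 2 ^ (j+1) := le_of_lt hA
        exact_mod_cast this
      have hpv : p = ((2:ℝ) ^ (j+1))⁻¹ := by rw [hp, inv_pow]
      rw [hpv]
      rw [mul_inv_le_iff₀ (by positivity)]
      linarith
    · have hc : (2:ℝ) ^ j ≤ (B.card : ℝ) := by exact_mod_cast hB
      have hpv : p = ((2:ℝ) ^ (j+1))⁻¹ := by rw [hp, inv_pow]
      rw [hpv, le_mul_inv_iff₀ (by positivity)]
      rw [pow_succ]
      nlinarith
  -- on the event, the gap is at least r - r'
  have hgap : ∀ S ∈ X.powerset.filter (fun S => S ∩ A = ∅ ∧ (S ∩ B).Nonempty),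
      r - r' ≤ |infDist a (S : Set V) - infDist b (S : Set V)| := by
    intro S hS
    rw [Finset.mem_filter] at hS
    obtain ⟨hSX, hSA, x, hx⟩ := hS
    rw [Finset.mem_inter] at hx
    have hSX' : S ⊆ X := Finset.mem_powerset.mp hSX
    have hxB : dist b x ≤ r' := (Finset.mem_filter.mp hx.2).2
    have hbS : infDist b (S : Set V) ≤ r' :=
      le_trans (infDist_le_dist_of_mem (by exact_mod_cast hx.1)) hxB
    have haS : r ≤ infDist a (S : Set V) := by
      by_contra hlt
      push_neg at hlt
      obtain ⟨y, hyS, hy⟩ := (infDist_lt_iff ⟨x, by exact_mod_cast hx.1⟩).mp hlt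
      have hyS' : y ∈ S := by exact_mod_cast hyS
      have hyA : y ∈ A := by
        rw [hAdef, Finset.mem_filter]; exact ⟨hSX' hyS', hy⟩
      have : y ∈ S ∩ A := Finset.mem_inter.mpr ⟨hyS', hyA⟩
      rw [hSA] at this
      exact absurd this (Finset.notMem_empty y)
    have hnn : 0 ≤ infDist b (S : Set V) := infDist_nonneg
    rw [abs_of_nonneg (by linarith)]
    linarith
  -- combine
  have hsum : (r - r') * ((1:ℝ)/32) ≤
      ∑ S ∈ X.powerset, p ^ S.card * (1 - p) ^ (X.card - S.card) *
        |infDist a (S : Set V) - infDist b (S : Set V)| := by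
    calc (r - r') * ((1:ℝ)/32)
        ≤ (r - r') * ∑ S ∈ X.powerset.filter (fun S => S ∩ A = ∅ ∧ (S ∩ B).Nonempty),
            p ^ S.card * (1 - p) ^ (X.card - S.card) := by
          apply mul_le_mul_of_nonneg_left hprob (by linarith)
      _ = ∑ S ∈ X.powerset.filter (fun S => S ∩ A = ∅ ∧ (S ∩ B).Nonempty),
            p ^ S.card * (1 - p) ^ (X.card - S.card) * (r - r') := by
          rw [Finset.mul_sum]; exact Finset.sum_congr rfl fun S _ => by ring
      _ ≤ ∑ S ∈ X.powerset.filter (fun S => S ∩ A = ∅ ∧ (S ∩ B).Nonempty),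
            p ^ S.card * (1 - p) ^ (X.card - S.card) *
              |infDist a (S : Set V) - infDist b (S : Set V)| := by
          apply Finset.sum_le_sum
          intro S hS
          exact mul_le_mul_of_nonneg_left (hgap S hS) (by positivity)
      _ ≤ ∑ S ∈ X.powerset, p ^ S.card * (1 - p) ^ (X.card - S.card) *
              |infDist a (S : Set V) - infDist b (S : Set V)| := by
          apply Finset.sum_le_sum_of_subset_of_nonneg (Finset.filter_subset _ _)
          intro S _ _
          positivity
  linarith

open Metric in
private lemma pair_bound {V : Type} [MetricSpace V] (X : Finset V) (L : ℕ)
    (hL : X.card < 2 ^ (L + 1)) {u v : V} (hu : u ∈ X) (hv : v ∈ X) :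
    dist u v ≤ 96 * ∑ j ∈ Finset.range L, ∑ S ∈ X.powerset,
      ((2:ℝ)⁻¹ ^ (j + 1)) ^ S.card * (1 - (2:ℝ)⁻¹ ^ (j + 1)) ^ (X.card - S.card) *
        |infDist u (S : Set V) - infDist v (S : Set V)| := by
  classical
  have hterm : ∀ (j : ℕ) (S : Finset V), 0 ≤
      ((2:ℝ)⁻¹ ^ (j + 1)) ^ S.card * (1 - (2:ℝ)⁻¹ ^ (j + 1)) ^ (X.card - S.card) *
        |infDist u (S : Set V) - infDist v (S : Set V)| := by
    intro j S
    have h1 : (2:ℝ)⁻¹ ^ (j+1) ≤ 1 := pow_le_one₀ (by norm_num) (by norm_num)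
    have h2 : (0:ℝ) ≤ (2:ℝ)⁻¹ ^ (j+1) := by positivity
    apply mul_nonneg (mul_nonneg (pow_nonneg h2 _) (pow_nonneg (by linarith) _)) (abs_nonneg _)
  have hinner : ∀ j : ℕ, 0 ≤ ∑ S ∈ X.powerset,
      ((2:ℝ)⁻¹ ^ (j + 1)) ^ S.card * (1 - (2:ℝ)⁻¹ ^ (j + 1)) ^ (X.card - S.card) *
        |infDist u (S : Set V) - infDist v (S : Set V)| :=
    fun j => Finset.sum_nonneg fun S _ => hterm j S
  rcases eq_or_lt_of_le (dist_nonneg (x := u) (y := v)) with hΔ | hΔ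
  · rw [← hΔ]
    have : 0 ≤ ∑ j ∈ Finset.range L, ∑ S ∈ X.powerset,
        ((2:ℝ)⁻¹ ^ (j + 1)) ^ S.card * (1 - (2:ℝ)⁻¹ ^ (j + 1)) ^ (X.card - S.card) *
          |infDist u (S : Set V) - infDist v (S : Set V)| :=
      Finset.sum_nonneg fun j _ => hinner j
    linarith
  -- main case : dist u v > 0
  set D := dist u v with hD
  set cand : Finset ℝ := X.image (dist u) ∪ X.image (dist v) with hcand
  set nn : V → ℝ → ℕ := fun a s => (X.filter (fun x => dist a x ≤ s)).card with hnn
  set T : ℕ → Finset ℝ := fun j => cand.filter (fun s => 2^j ≤ nn u s ∧ 2^j ≤ nn v s) with hT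
  set ρ : ℕ → ℝ := fun j => min (D/3) (if h : (T j).Nonempty then (T j).min' h else D) with hρ
  have c0 : ∀ s ∈ cand, (0:ℝ) ≤ s := by
    intro s hs
    rw [hcand, Finset.mem_union, Finset.mem_image, Finset.mem_image] at hs
    rcases hs with ⟨x, _, rfl⟩ | ⟨x, _, rfl⟩ <;> exact dist_nonneg
  have rho_le : ∀ j, ρ j ≤ D/3 := fun j => min_le_left _ _
  have rho_nonneg : ∀ j, 0 ≤ ρ j := by
    intro j
    apply le_min (by linarith)
    split
    · next h => exact c0 _ (Finset.filter_subset _ _ ((T j).min'_mem h))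
    · linarith
  have rho_le_min' : ∀ j (h : (T j).Nonempty), ρ j ≤ (T j).min' h := by
    intro j h
    rw [hρ]
    simp only [dif_pos h]
    exact min_le_right _ _
  have rho0 : ρ 0 = 0 := by
    have h0T : (0:ℝ) ∈ T 0 := by
      rw [hT]
      refine Finset.mem_filter.mpr ⟨?_, ?_, ?_⟩
      · exact Finset.mem_union_left _ (Finset.mem_image.mpr ⟨u, hu, dist_self u⟩)
      · rw [hnn, pow_zero]
        exact Finset.card_pos.mpr ⟨u, Finset.mem_filter.mpr ⟨hu, by simp⟩⟩
      · rw [hnn, pow_zero]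
        exact Finset.card_pos.mpr ⟨v, Finset.mem_filter.mpr ⟨hv, by simp⟩⟩
    have hne : (T 0).Nonempty := ⟨0, h0T⟩
    have h1 : (T 0).min' hne ≤ 0 := Finset.min'_le _ _ h0T
    have h2 : 0 ≤ (T 0).min' hne := c0 _ (Finset.filter_subset _ _ ((T 0).min'_mem hne))
    have h3 : (T 0).min' hne = 0 := le_antisymm h1 h2
    rw [hρ]
    simp only [dif_pos hne, h3]
    exact min_eq_right (by linarith)
  have d2 : ∀ j, ρ j < D/3 → 2^j ≤ nn u (ρ j) ∧ 2^j ≤ nn v (ρ j) := by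
    intro j h
    by_cases hne : (T j).Nonempty
    · have hval : ρ j = (T j).min' hne := by
        rw [hρ] at h ⊢
        simp only [dif_pos hne] at h ⊢
        rcases min_cases (D/3) ((T j).min' hne) with ⟨heq, _⟩ | ⟨heq, _⟩
        · rw [heq] at h; linarith
        · exact heq
      have hmem : ρ j ∈ T j := hval ▸ (T j).min'_mem hne
      rw [hT] at hmem
      exact (Finset.mem_filter.mp hmem).2
    · exfalso
      rw [hρ] at h
      simp only [dif_neg hne] at h
      rw [min_eq_left (by linarith)] at h
      linarith
  have d1 : ∀ j, (X.filter (fun x => dist u x < ρ j)).card < 2^j ∨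
      (X.filter (fun x => dist v x < ρ j)).card < 2^j := by
    intro j
    by_contra hcon
    push_neg at hcon
    obtain ⟨hcu, hcv⟩ := hcon
    have hAune : (X.filter (fun x => dist u x < ρ j)).Nonempty := by
      rw [← Finset.card_pos]; calc 0 < 2^j := pow_pos (by norm_num) j
        _ ≤ _ := hcu
    have hAvne : (X.filter (fun x => dist v x < ρ j)).Nonempty := by
      rw [← Finset.card_pos]; calc 0 < 2^j := pow_pos (by norm_num) j
        _ ≤ _ := hcv
    set su := ((X.filter (fun x => dist u x < ρ j)).image (dist u)).max'
      (hAune.image _) with hsu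
    set sv := ((X.filter (fun x => dist v x < ρ j)).image (dist v)).max'
      (hAvne.image _) with hsv
    have hsu_lt : su < ρ j := by
      rw [hsu]
      rw [Finset.max'_lt_iff]
      intro y hy
      obtain ⟨x, hx, rfl⟩ := Finset.mem_image.mp hy
      exact (Finset.mem_filter.mp hx).2
    have hsv_lt : sv < ρ j := by
      rw [hsv]
      rw [Finset.max'_lt_iff]
      intro y hy
      obtain ⟨x, hx, rfl⟩ := Finset.mem_image.mp hy
      exact (Finset.mem_filter.mp hx).2
    have hsucand : su ∈ cand := by
      rw [hcand]
      apply Finset.mem_union_left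
      exact Finset.image_subset_image (Finset.filter_subset _ _)
        (Finset.max'_mem _ (hAune.image _))
    have hsvcand : sv ∈ cand := by
      rw [hcand]
      apply Finset.mem_union_right
      exact Finset.image_subset_image (Finset.filter_subset _ _)
        (Finset.max'_mem _ (hAvne.image _))
    set s := max su sv with hs
    have hscand : s ∈ cand := by
      rcases max_choice su sv with h | h <;> rw [hs, h] <;> assumption
    have hnu : 2^j ≤ nn u s := by
      rw [hnn]
      refine le_trans hcu (Finset.card_le_card ?_)
      intro x hx
      rw [Finset.mem_filter] at hx ⊢
      refine ⟨hx.1, ?_⟩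
      calc dist u x ≤ su := Finset.le_max' _ _
            (Finset.mem_image_of_mem _ (Finset.mem_filter.mpr hx))
        _ ≤ s := le_max_left _ _
    have hnv : 2^j ≤ nn v s := by
      rw [hnn]
      refine le_trans hcv (Finset.card_le_card ?_)
      intro x hx
      rw [Finset.mem_filter] at hx ⊢
      refine ⟨hx.1, ?_⟩
      calc dist v x ≤ sv := Finset.le_max' _ _
            (Finset.mem_image_of_mem _ (Finset.mem_filter.mpr hx))
        _ ≤ s := le_max_right _ _
    have hsT : s ∈ T j := by
      rw [hT]; exact Finset.mem_filter.mpr ⟨hscand, hnu, hnv⟩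
    have hTne : (T j).Nonempty := ⟨s, hsT⟩
    have : ρ j ≤ s := le_trans (rho_le_min' j hTne) (Finset.min'_le _ _ hsT)
    have hslt : s < ρ j := max_lt hsu_lt hsv_lt
    linarith
  have dtop : ρ L = D/3 := by
    by_contra h
    have hlt : ρ L < D/3 := lt_of_le_of_ne (rho_le L) h
    obtain ⟨h1, h2⟩ := d2 L hlt
    rw [hnn] at h1 h2
    have hdisj : Disjoint (X.filter (fun x => dist u x ≤ ρ L))
        (X.filter (fun x => dist v x ≤ ρ L)) := by
      rw [Finset.disjoint_left]
      intro x hx1 hx2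
      have hd1 : dist u x ≤ ρ L := (Finset.mem_filter.mp hx1).2
      have hd2 : dist v x ≤ ρ L := (Finset.mem_filter.mp hx2).2
      have : D ≤ dist u x + dist x v := dist_triangle u x v
      rw [dist_comm x v] at this
      linarith
    have hcard : 2^(L+1) ≤ X.card := by
      calc 2^(L+1) = 2^L + 2^L := by ring
        _ ≤ (X.filter (fun x => dist u x ≤ ρ L)).card
            + (X.filter (fun x => dist v x ≤ ρ L)).card := Nat.add_le_add h1 h2
        _ = ((X.filter (fun x => dist u x ≤ ρ L)) ∪
            (X.filter (fun x => dist v x ≤ ρ L))).card :=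
          (Finset.card_union_of_disjoint hdisj).symm
        _ ≤ X.card := Finset.card_le_card
          (Finset.union_subset (Finset.filter_subset _ _) (Finset.filter_subset _ _))
    omega
  have htel : ∑ j ∈ Finset.range L, (ρ (j+1) - ρ j) = ρ L - ρ 0 :=
    Finset.sum_range_sub ρ L
  have hstep : ∀ j ∈ Finset.range L, ρ (j+1) - ρ j ≤
      32 * ∑ S ∈ X.powerset,
        ((2:ℝ)⁻¹ ^ (j + 1)) ^ S.card * (1 - (2:ℝ)⁻¹ ^ (j + 1)) ^ (X.card - S.card) *
          |infDist u (S : Set V) - infDist v (S : Set V)| := by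
    intro j _
    by_cases hord : ρ (j+1) ≤ ρ j
    · calc ρ (j+1) - ρ j ≤ 0 := by linarith
        _ ≤ _ := by linarith [hinner j]
    · push_neg at hord
      have hjD : ρ j < D/3 := lt_of_lt_of_le hord (rho_le _)
      obtain ⟨hBu, hBv⟩ := d2 j hjD
      rw [hnn] at hBu hBv
      have hsep : ρ (j+1) + ρ j ≤ D := by
        have := rho_le (j+1); linarith
      rcases d1 (j+1) with hAu | hAv
      · exact scale_bound X j (rho_nonneg j) hord hAu hBv (hD ▸ hsep)
      · have hres := scale_bound X j (rho_nonneg j) hord hAv hBu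
          (by rw [dist_comm]; exact hD ▸ hsep)
        refine le_trans hres (le_of_eq ?_)
        congr 1
        refine Finset.sum_congr rfl fun S _ => ?_
        rw [abs_sub_comm]
  calc D = 3 * (ρ L - ρ 0) := by rw [dtop, rho0]; ring
    _ = 3 * ∑ j ∈ Finset.range L, (ρ (j+1) - ρ j) := by rw [htel]
    _ ≤ 3 * ∑ j ∈ Finset.range L, (32 * ∑ S ∈ X.powerset,
        ((2:ℝ)⁻¹ ^ (j + 1)) ^ S.card * (1 - (2:ℝ)⁻¹ ^ (j + 1)) ^ (X.card - S.card) *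
          |infDist u (S : Set V) - infDist v (S : Set V)|) := by
      apply mul_le_mul_of_nonneg_left (Finset.sum_le_sum hstep) (by norm_num)
    _ = 96 * ∑ j ∈ Finset.range L, ∑ S ∈ X.powerset,
        ((2:ℝ)⁻¹ ^ (j + 1)) ^ S.card * (1 - (2:ℝ)⁻¹ ^ (j + 1)) ^ (X.card - S.card) *
          |infDist u (S : Set V) - infDist v (S : Set V)| := by
      rw [← Finset.mul_sum, ← mul_assoc]; norm_num

open Metric in
private lemma key (V : Type) [MetricSpace V] [Fintype V] (w : V → V → ℝ)
    (hw : ∀ u v, 0 ≤ w u v) (k : ℕ) (hk : 2 ≤ k)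
    (hsupp : (Finset.univ.filter (fun p : V × V => w p.1 p.2 ≠ 0)).card ≤ k) :
    ∃ g : V → ℝ, (∀ u v : V, |g u - g v| ≤ dist u v) ∧
      ∑ u : V, ∑ v : V, w u v * dist u v ≤
        (500:ℝ) * Real.log k * ∑ u : V, ∑ v : V, w u v * |g u - g v| := by
  classical
  set P : Finset (V × V) := Finset.univ.filter (fun p : V × V => w p.1 p.2 ≠ 0) with hP
  set X : Finset V := P.image Prod.fst ∪ P.image Prod.snd with hX
  have hXk : X.card ≤ 2 * k := by
    calc X.card ≤ (P.image Prod.fst).card + (P.image Prod.snd).card :=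
          Finset.card_union_le _ _
      _ ≤ P.card + P.card := Nat.add_le_add (Finset.card_image_le) (Finset.card_image_le)
      _ ≤ 2 * k := by omega
  set m := Nat.log 2 k with hm
  set L := m + 1 with hLdef
  have hkL : k < 2 ^ L := Nat.lt_pow_succ_log_self (by norm_num) k
  have hXL : X.card < 2 ^ (L + 1) := by
    have h2 : 2 ^ (L + 1) = 2 * 2 ^ L := by rw [pow_succ]; ring
    omega
  -- abbreviations
  set μ : ℕ → Finset V → ℝ := fun j S =>
    ((2:ℝ)⁻¹ ^ (j + 1)) ^ S.card * (1 - (2:ℝ)⁻¹ ^ (j + 1)) ^ (X.card - S.card) with hμ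
  set F : Finset V → ℝ := fun S =>
    ∑ u : V, ∑ v : V, w u v * |infDist u (S : Set V) - infDist v (S : Set V)| with hF
  have hμpos : ∀ (j : ℕ) (S : Finset V), 0 < μ j S := by
    intro j S
    have hple : (2:ℝ)⁻¹ ^ (j+1) ≤ 1/2 := by
      calc (2:ℝ)⁻¹ ^ (j+1) ≤ (2:ℝ)⁻¹ ^ 1 :=
            pow_le_pow_of_le_one (by norm_num) (by norm_num) (by omega)
        _ = 1/2 := by norm_num
    have h0 : (0:ℝ) < (2:ℝ)⁻¹ ^ (j+1) := by positivity
    exact mul_pos (pow_pos h0 _) (pow_pos (by linarith) _)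
  have hF0 : ∀ S, 0 ≤ F S := by
    intro S
    apply Finset.sum_nonneg
    intro u _
    exact Finset.sum_nonneg fun v _ => mul_nonneg (hw u v) (abs_nonneg _)
  -- per-pair inequality
  have hpair : ∀ u v : V, w u v * dist u v ≤
      96 * ∑ j ∈ Finset.range L, ∑ S ∈ X.powerset,
        w u v * (μ j S * |infDist u (S : Set V) - infDist v (S : Set V)|) := by
    intro u v
    by_cases hwuv : w u v = 0
    · simp [hwuv]
    · have hpmem : (u, v) ∈ P := by
        rw [hP]; exact Finset.mem_filter.mpr ⟨Finset.mem_univ _, hwuv⟩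
      have hu : u ∈ X := by
        rw [hX]
        exact Finset.mem_union_left _ (Finset.mem_image_of_mem Prod.fst hpmem)
      have hv : v ∈ X := by
        rw [hX]
        exact Finset.mem_union_right _ (Finset.mem_image_of_mem Prod.snd hpmem)
      have hpb := pair_bound X L hXL hu hv
      have hwnn := hw u v
      calc w u v * dist u v
          ≤ w u v * (96 * ∑ j ∈ Finset.range L, ∑ S ∈ X.powerset,
              μ j S * |infDist u (S : Set V) - infDist v (S : Set V)|) :=
            mul_le_mul_of_nonneg_left hpb hwnn
        _ = 96 * ∑ j ∈ Finset.range L, ∑ S ∈ X.powerset,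
              w u v * (μ j S * |infDist u (S : Set V) - infDist v (S : Set V)|) := by
            simp only [Finset.mul_sum]
            refine Finset.sum_congr rfl fun j _ => Finset.sum_congr rfl fun S _ => by ring
  have hmain : ∑ u : V, ∑ v : V, w u v * dist u v ≤
      96 * ∑ j ∈ Finset.range L, ∑ S ∈ X.powerset, μ j S * F S := by
    have h1 : ∑ u : V, ∑ v : V, w u v * dist u v ≤
        ∑ u : V, ∑ v : V, (96 * ∑ j ∈ Finset.range L, ∑ S ∈ X.powerset,
          w u v * (μ j S * |infDist u (S : Set V) - infDist v (S : Set V)|)) :=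
      Finset.sum_le_sum fun u _ => Finset.sum_le_sum fun v _ => hpair u v
    refine h1.trans (le_of_eq ?_)
    have h2 : ∑ u : V, ∑ v : V, (96 * ∑ j ∈ Finset.range L, ∑ S ∈ X.powerset,
          w u v * (μ j S * |infDist u (S : Set V) - infDist v (S : Set V)|))
        = 96 * ∑ u : V, ∑ v : V, ∑ j ∈ Finset.range L, ∑ S ∈ X.powerset,
          w u v * (μ j S * |infDist u (S : Set V) - infDist v (S : Set V)|) := by
      rw [Finset.mul_sum]
      refine Finset.sum_congr rfl fun u _ => by rw [Finset.mul_sum]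
    rw [h2]
    congr 1
    calc ∑ u : V, ∑ v : V, ∑ j ∈ Finset.range L, ∑ S ∈ X.powerset,
          w u v * (μ j S * |infDist u (S : Set V) - infDist v (S : Set V)|)
        = ∑ u : V, ∑ j ∈ Finset.range L, ∑ v : V, ∑ S ∈ X.powerset,
          w u v * (μ j S * |infDist u (S : Set V) - infDist v (S : Set V)|) :=
          Finset.sum_congr rfl fun u _ => Finset.sum_comm
      _ = ∑ j ∈ Finset.range L, ∑ u : V, ∑ v : V, ∑ S ∈ X.powerset,
          w u v * (μ j S * |infDist u (S : Set V) - infDist v (S : Set V)|) :=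
          Finset.sum_comm
      _ = ∑ j ∈ Finset.range L, ∑ u : V, ∑ S ∈ X.powerset, ∑ v : V,
          w u v * (μ j S * |infDist u (S : Set V) - infDist v (S : Set V)|) :=
          Finset.sum_congr rfl fun j _ => Finset.sum_congr rfl fun u _ =>
            Finset.sum_comm
      _ = ∑ j ∈ Finset.range L, ∑ S ∈ X.powerset, ∑ u : V, ∑ v : V,
          w u v * (μ j S * |infDist u (S : Set V) - infDist v (S : Set V)|) :=
          Finset.sum_congr rfl fun j _ => Finset.sum_comm
      _ = ∑ j ∈ Finset.range L, ∑ S ∈ X.powerset, μ j S * F S := by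
          refine Finset.sum_congr rfl fun j _ => Finset.sum_congr rfl fun S _ => ?_
          rw [hF]
          simp only [Finset.mul_sum]
          refine Finset.sum_congr rfl fun u _ => Finset.sum_congr rfl fun v _ => by ring
  -- averaging argument
  have hone : ∀ j : ℕ, ∑ S ∈ X.powerset, μ j S = 1 := fun j => bern_sum X _
  set T0 := ∑ u : V, ∑ v : V, w u v * dist u v with hT0
  have hLpos : (0:ℝ) < (L:ℝ) := by
    have : 0 < L := Nat.succ_pos m
    exact_mod_cast this
  have hsum_le : ∑ p ∈ (Finset.range L) ×ˢ X.powerset, μ p.1 p.2 * (T0 / (96 * (L:ℝ)))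
      ≤ ∑ p ∈ (Finset.range L) ×ˢ X.powerset, μ p.1 p.2 * F p.2 := by
    rw [Finset.sum_product, Finset.sum_product]
    have hLHS : ∑ j ∈ Finset.range L, ∑ S ∈ X.powerset, μ j S * (T0 / (96 * (L:ℝ)))
        = T0 / 96 := by
      have hstepc : ∀ j ∈ Finset.range L,
          ∑ S ∈ X.powerset, μ j S * (T0 / (96 * (L:ℝ))) = T0 / (96 * (L:ℝ)) := by
        intro j _
        rw [← Finset.sum_mul, hone j, one_mul]
      rw [Finset.sum_congr rfl hstepc, Finset.sum_const, Finset.card_range, nsmul_eq_mul]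
      field_simp
    rw [hLHS]
    linarith [hmain]
  have hne : ((Finset.range L) ×ˢ X.powerset).Nonempty := by
    refine ⟨(0, ∅), Finset.mem_product.mpr ⟨?_, ?_⟩⟩
    · simp [hLdef]
    · simp
  obtain ⟨p0, _, hp0⟩ := Finset.exists_le_of_sum_le hne hsum_le
  have hμp : 0 < μ p0.1 p0.2 := hμpos _ _
  have hFS : T0 / (96 * (L:ℝ)) ≤ F p0.2 := le_of_mul_le_mul_left hp0 hμp
  have hT0le : T0 ≤ 96 * (L:ℝ) * F p0.2 := by
    rw [div_le_iff₀ (by positivity)] at hFS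
    linarith
  -- comparing 96·L with 500·log k
  have hm2 : (2:ℝ) ^ m ≤ (k:ℝ) := by exact_mod_cast Nat.pow_log_le_self 2 (by omega)
  have hlogm : (m:ℝ) * Real.log 2 ≤ Real.log k := by
    rw [← Real.log_pow]
    exact Real.log_le_log (by positivity) hm2
  have hlog2 : (0.6931471803:ℝ) < Real.log 2 := Real.log_two_gt_d9
  have hlogk2 : Real.log 2 ≤ Real.log k := by
    apply Real.log_le_log (by norm_num)
    exact_mod_cast hk
  have hmnn : (0:ℝ) ≤ (m:ℝ) := Nat.cast_nonneg m
  have hCL : 96 * (L:ℝ) ≤ 500 * Real.log k := by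
    have hLcast : (L:ℝ) = (m:ℝ) + 1 := by rw [hLdef]; push_cast; ring
    rw [hLcast]
    nlinarith
  refine ⟨fun x => infDist x ((p0.2 : Finset V) : Set V), ?_, ?_⟩
  · intro x y
    have h := (lipschitz_infDist_pt ((p0.2 : Finset V) : Set V)).dist_le_mul x y
    rwa [Real.dist_eq, NNReal.coe_one, one_mul] at h
  · calc ∑ u : V, ∑ v : V, w u v * dist u v = T0 := by rw [hT0]
      _ ≤ 96 * (L:ℝ) * F p0.2 := hT0le
      _ ≤ 500 * Real.log k * F p0.2 :=
        mul_le_mul_of_nonneg_right hCL (hF0 p0.2)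
      _ = 500 * Real.log k * ∑ u : V, ∑ v : V,
          w u v * |infDist u ((p0.2 : Finset V) : Set V)
            - infDist v ((p0.2 : Finset V) : Set V)| := by rw [hF]

/-- **Bourgain line embeddings with low average distortion.**
There is a universal constant `C` such that for every finite metric space `(V,d)` with
`n = |V| ≥ 2` and every nonnegative weight function `w`, there is a 1-Lipschitz map
`g : V → ℝ` with `Σ w(u,v)·d(u,v) ≤ C·(log n)·Σ w(u,v)·|g(u) − g(v)|`; moreover, if
`w` is supported on at most `k ≥ 2` pairs there is such a `g` with distortion
factor `C·(log k)`. -/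
theorem line_embedding_average_distortion :
    ∃ C : ℝ, 0 < C ∧
      ∀ (V : Type) [MetricSpace V] [Fintype V] (w : V → V → ℝ),
        (∀ u v, 0 ≤ w u v) →
        (2 ≤ Fintype.card V →
          ∃ g : V → ℝ, (∀ u v : V, |g u - g v| ≤ dist u v) ∧
            ∑ u : V, ∑ v : V, w u v * dist u v ≤
              C * Real.log (Fintype.card V) *
                ∑ u : V, ∑ v : V, w u v * |g u - g v|) ∧
        (∀ k : ℕ, 2 ≤ k →
          (Finset.univ.filter (fun p : V × V => w p.1 p.2 ≠ 0)).card ≤ k →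
          ∃ g : V → ℝ, (∀ u v : V, |g u - g v| ≤ dist u v) ∧
            ∑ u : V, ∑ v : V, w u v * dist u v ≤
              C * Real.log k * ∑ u : V, ∑ v : V, w u v * |g u - g v|) := by
  refine ⟨1000, by norm_num, ?_⟩
  intro V _ _ w hw
  constructor
  · intro hn
    set n := Fintype.card V with hn'
    have hcard : (Finset.univ.filter (fun p : V × V => w p.1 p.2 ≠ 0)).card ≤ n * n := by
      calc (Finset.univ.filter (fun p : V × V => w p.1 p.2 ≠ 0)).card
          ≤ (Finset.univ : Finset (V × V)).card := Finset.card_filter_le _ _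
        _ = n * n := by rw [Finset.card_univ, Fintype.card_prod]
    have hk2 : 2 ≤ n * n := le_trans hn (Nat.le_mul_of_pos_left n (by omega))
    obtain ⟨g, hg, hineq⟩ := key V w hw (n * n) hk2 hcard
    refine ⟨g, hg, ?_⟩
    have hn0 : (0:ℝ) < (n:ℝ) := by
      have : 0 < n := by omega
      exact_mod_cast this
    have hlog : Real.log ((n * n : ℕ) : ℝ) = 2 * Real.log n := by
      push_cast
      rw [Real.log_mul (ne_of_gt hn0) (ne_of_gt hn0), two_mul]
    calc ∑ u : V, ∑ v : V, w u v * dist u v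
        ≤ 500 * Real.log ((n * n : ℕ) : ℝ) * ∑ u : V, ∑ v : V, w u v * |g u - g v| := hineq
      _ = 1000 * Real.log n * ∑ u : V, ∑ v : V, w u v * |g u - g v| := by
          rw [hlog]; ring
  · intro k hk hsupp
    obtain ⟨g, hg, hineq⟩ := key V w hw k hk hsupp
    refine ⟨g, hg, ?_⟩
    refine hineq.trans ?_
    have hF : 0 ≤ ∑ u : V, ∑ v : V, w u v * |g u - g v| :=
      Finset.sum_nonneg fun u _ => Finset.sum_nonneg fun v _ =>
        mul_nonneg (hw u v) (abs_nonneg _)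
    have hlk : 0 ≤ Real.log k := Real.log_nonneg (by exact_mod_cast le_trans one_le_two hk)
    nlinarith
end

section
/- Let G=(V,E) be an undirected graph with nonnegative edge lengths ℓ, source-sink pairs (s_i,t_i) with demands D_i ≥ 0 (1 ≤ i ≤ k) satisfying Σ_i D_i·dist_ℓ(s_i,t_i) = 1, and let α > 0. Let g: V → [0,β] be 1-Lipschitz with respect to dist_ℓ and satisfy Σ_i D_i·dist_ℓ(s_i,t_i) ≤ α·Σ_i D_i·|g(s_i)−g(t_i)|. For θ ∈ (0,β) let S_θ = {u ∈ V : g(u) ≤ θ} and let D(δ(S_θ)) denote the total demand of pairs separated by the edge set δ(S_θ). Then ∫_0^β D(δ(S_θ)) dθ ≥ 1/α. -/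
open Finset MeasureTheory
open scoped ENNReal Classical

/-- `UWalk ep1 ep2 s t p`: in the undirected graph whose edge `e` has endpoints
`ep1 e` and `ep2 e`, the list of edges `p` forms a walk from `s` to `t`. -/
def UWalk {V E : Type} [DecidableEq V] (ep1 ep2 : E → V) : V → V → List E → Prop
  | s, t, [] => s = t
  | s, t, e :: p => (ep1 e = s ∨ ep2 e = s) ∧
      UWalk ep1 ep2 (if ep1 e = s then ep2 e else ep1 e) t p

/-- `F` separates `s` and `t`: they lie in different connected components of `G∖F`. -/
def USep {V E : Type} [DecidableEq V] (ep1 ep2 : E → V) (F : Finset E) (s t : V) : Prop :=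
  ¬ ∃ p : List E, UWalk ep1 ep2 s t p ∧ ∀ e ∈ p, e ∉ F

/-- `δ(S)`: the set of edges with exactly one endpoint in `S`. -/
def uvcut {V E : Type} [Fintype E] [DecidableEq V] (ep1 ep2 : E → V) (S : Finset V) :
    Finset E :=
  Finset.univ.filter (fun e => (ep1 e ∈ S ∧ ep2 e ∉ S) ∨ (ep1 e ∉ S ∧ ep2 e ∈ S))

/-- Shortest-path distance (in `ℝ≥0∞`, `⊤` when unreachable) under edge lengths `len`. -/
noncomputable def udist {V E : Type} [DecidableEq V] (ep1 ep2 : E → V) (len : E → ℝ)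
    (u v : V) : ℝ≥0∞ :=
  ⨅ p : { p : List E // UWalk ep1 ep2 u v p }, ENNReal.ofReal ((p.1.map len).sum)

lemma uwalk_side {V E : Type} [Fintype E] [DecidableEq V] (ep1 ep2 : E → V) (S : Finset V) :
    ∀ (p : List E) (s t : V), UWalk ep1 ep2 s t p →
      (∀ e ∈ p, e ∉ uvcut ep1 ep2 S) → (s ∈ S ↔ t ∈ S) := by
  intro p
  induction p with
  | nil =>
    intro s t hw _
    cases hw; rfl
  | cons e p ih =>
    intro s t hw hF
    obtain ⟨hend, hw'⟩ := hw
    have he : e ∉ uvcut ep1 ep2 S := hF e List.mem_cons_self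
    simp only [uvcut, Finset.mem_filter, Finset.mem_univ, true_and, not_or, not_and,
      not_not] at he
    have h1 : (s ∈ S ↔ (if ep1 e = s then ep2 e else ep1 e) ∈ S) := by
      by_cases h : ep1 e = s
      · rw [if_pos h, ← h]; tauto
      · rw [if_neg h, ← hend.resolve_left h]; tauto
    exact h1.trans (ih _ t hw' fun e' he' => hF e' (List.mem_cons_of_mem _ he'))

lemma usep_of_mem_ne {V E : Type} [Fintype E] [DecidableEq V] (ep1 ep2 : E → V)
    (S : Finset V) (s t : V) (h : ¬(s ∈ S ↔ t ∈ S)) :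
    USep ep1 ep2 (uvcut ep1 ep2 S) s t := by
  rintro ⟨p, hw, hF⟩
  exact h (uwalk_side ep1 ep2 S p s t hw hF)

/-- Let `G` be an undirected graph with nonnegative edge lengths `ℓ`,
source-sink pairs `(s i, t i)` with demands `D i ≥ 0` satisfying
`Σ D i · dist_ℓ(s i, t i) = 1`, and let `α > 0`. If `g : V → [0,β]` is 1-Lipschitz
w.r.t. `dist_ℓ` and satisfies `Σ D i · dist_ℓ(s i, t i) ≤ α · Σ D i · |g(s i) − g(t i)|`,
then, with `S_θ = {u : g u ≤ θ}`, one has `∫_0^β D(δ(S_θ)) dθ ≥ 1/α`. -/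
theorem demand_integral_lower_bound {V E : Type} [Fintype V] [Fintype E]
    [DecidableEq V] [DecidableEq E]
    (ep1 ep2 : E → V) (ℓ : E → ℝ) (hℓ : ∀ e, 0 ≤ ℓ e)
    {k : ℕ} (s t : Fin k → V) (D : Fin k → ℝ) (hD : ∀ i, 0 ≤ D i)
    (hdem : ∑ i : Fin k, ENNReal.ofReal (D i) * udist ep1 ep2 ℓ (s i) (t i) = 1)
    (α : ℝ) (hα : 0 < α)
    (β : ℝ) (g : V → ℝ) (hg : ∀ u, g u ∈ Set.Icc (0:ℝ) β)
    (hLip : ∀ u v : V, ENNReal.ofReal |g u - g v| ≤ udist ep1 ep2 ℓ u v)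
    (hdist : ∑ i : Fin k, ENNReal.ofReal (D i) * udist ep1 ep2 ℓ (s i) (t i) ≤
      ENNReal.ofReal (α * ∑ i : Fin k, D i * |g (s i) - g (t i)|)) :
    1 / α ≤ ∫ θ in (0:ℝ)..β, ∑ i : Fin k,
      if USep ep1 ep2 (uvcut ep1 ep2 (Finset.univ.filter (fun u => g u ≤ θ))) (s i) (t i)
      then D i else 0 := by
  -- k is nonzero, so V is inhabited and β ≥ 0
  rcases Nat.eq_zero_or_pos k with hk | hk
  · subst hk; simp at hdem
  have i0 : Fin k := ⟨0, hk⟩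
  have hβ : 0 ≤ β := le_trans (hg (s i0)).1 (hg (s i0)).2
  -- Step 1 : 1/α ≤ ∑ D i * |g (s i) - g (t i)|
  have h1 : 1 / α ≤ ∑ i : Fin k, D i * |g (s i) - g (t i)| := by
    rw [hdem] at hdist
    have h2 : (1 : ℝ) ≤ α * ∑ i : Fin k, D i * |g (s i) - g (t i)| := by
      by_contra hcon
      push_neg at hcon
      have := (ENNReal.ofReal_lt_one.2 hcon).trans_le hdist
      exact lt_irrefl _ this
    rw [div_le_iff₀ hα]
    linarith [h2, mul_comm α (∑ i : Fin k, D i * |g (s i) - g (t i)|)]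
  -- the separation sets
  set A : Fin k → Set ℝ := fun i => {θ : ℝ | USep ep1 ep2
    (uvcut ep1 ep2 (Finset.univ.filter (fun u => g u ≤ θ))) (s i) (t i)} with hAdef
  have hAmeas : ∀ i, MeasurableSet (A i) := by
    intro i
    have hrep : A i = ⋃ S ∈ {S : Finset V |
        USep ep1 ep2 (uvcut ep1 ep2 S) (s i) (t i)},
        {θ : ℝ | Finset.univ.filter (fun u => g u ≤ θ) = S} := by
      ext θ
      simp only [Set.mem_iUnion, Set.mem_setOf_eq, hAdef]
      constructor
      · intro h
        exact ⟨Finset.univ.filter (fun u => g u ≤ θ), h, rfl⟩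
      · rintro ⟨S, hS, rfl⟩
        exact hS
    rw [hrep]
    refine MeasurableSet.biUnion (Set.to_countable _) (fun S _ => ?_)
    have : {θ : ℝ | Finset.univ.filter (fun u => g u ≤ θ) = S} =
        ⋂ u : V, {θ : ℝ | (g u ≤ θ) ↔ u ∈ S} := by
      ext θ
      simp [Finset.ext_iff]
    rw [this]
    refine MeasurableSet.iInter (fun u => ?_)
    by_cases hu : u ∈ S
    · simp only [hu, iff_true]
      exact measurableSet_Ici
    · simp only [hu, iff_false, not_le]
      exact measurableSet_Iio
  -- the integrand as a sum of indicators
  have hfun : ∀ θ : ℝ, (∑ i : Fin k,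
      if USep ep1 ep2 (uvcut ep1 ep2 (Finset.univ.filter (fun u => g u ≤ θ))) (s i) (t i)
      then D i else 0) = ∑ i : Fin k, (A i).indicator (fun _ => D i) θ := by
    intro θ
    refine Finset.sum_congr rfl (fun i _ => ?_)
    rw [Set.indicator_apply]
    simp [hAdef, Set.mem_setOf_eq]
  -- integrability
  have hint : ∀ i, IntegrableOn ((A i).indicator (fun _ => D i)) (Set.Ioc 0 β) := by
    intro i
    refine Integrable.indicator ?_ (hAmeas i)
    exact integrableOn_const measure_Ioc_lt_top.ne
  have hintIoo : ∀ i, IntegrableOn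
      ((Set.Ioo (min (g (s i)) (g (t i))) (max (g (s i)) (g (t i)))).indicator
        (fun _ => D i)) (Set.Ioc 0 β) := by
    intro i
    refine Integrable.indicator ?_ measurableSet_Ioo
    exact integrableOn_const measure_Ioc_lt_top.ne
  -- per-pair lower bound
  have key : ∀ i : Fin k, D i * |g (s i) - g (t i)| ≤
      ∫ θ in Set.Ioc 0 β, (A i).indicator (fun _ => D i) θ := by
    intro i
    set a := min (g (s i)) (g (t i)) with ha
    set b := max (g (s i)) (g (t i)) with hb
    have ha0 : 0 ≤ a := le_min (hg (s i)).1 (hg (t i)).1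
    have hbβ : b ≤ β := max_le (hg (s i)).2 (hg (t i)).2
    have hab : a ≤ b := min_le_max
    have hsub : Set.Ioo a b ⊆ A i := by
      intro θ hθ
      simp only [hAdef, Set.mem_setOf_eq]
      apply usep_of_mem_ne
      simp only [Finset.mem_filter, Finset.mem_univ, true_and]
      intro hiff
      rcases le_total (g (s i)) (g (t i)) with h | h
      · rw [ha, min_eq_left h] at hθ
        rw [hb, max_eq_right h] at hθ
        have := hiff.mp (le_of_lt hθ.1)
        linarith [hθ.2]
      · rw [ha, min_eq_right h] at hθ
        rw [hb, max_eq_left h] at hθ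
        have := hiff.mpr (le_of_lt hθ.1)
        linarith [hθ.2]
    have hmono : ∀ θ : ℝ, (Set.Ioo a b).indicator (fun _ => D i) θ ≤
        (A i).indicator (fun _ => D i) θ :=
      Set.indicator_le_indicator_of_subset hsub (fun _ => hD i)
    have h3 : ∫ θ in Set.Ioc 0 β, (Set.Ioo a b).indicator (fun _ => D i) θ ≤
        ∫ θ in Set.Ioc 0 β, (A i).indicator (fun _ => D i) θ :=
      integral_mono (hintIoo i) (hint i) hmono
    have hIooSub : Set.Ioo a b ⊆ Set.Ioc 0 β := fun θ hθ =>
      ⟨lt_of_le_of_lt ha0 hθ.1, le_trans (le_of_lt hθ.2) hbβ⟩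
    have h4 : ∫ θ in Set.Ioc 0 β, (Set.Ioo a b).indicator (fun _ => D i) θ =
        D i * |g (s i) - g (t i)| := by
      rw [setIntegral_indicator measurableSet_Ioo,
        Set.inter_eq_self_of_subset_right hIooSub, setIntegral_const,
        Real.volume_real_Ioo_of_le hab, smul_eq_mul,
        mul_comm]
      congr 1
      rw [hb, ha, max_sub_min_eq_abs, abs_sub_comm]
    linarith [h3, h4 ▸ h3]
  -- put everything together
  rw [intervalIntegral.integral_of_le hβ]
  calc 1 / α ≤ ∑ i : Fin k, D i * |g (s i) - g (t i)| := h1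
    _ ≤ ∑ i : Fin k, ∫ θ in Set.Ioc 0 β, (A i).indicator (fun _ => D i) θ :=
        Finset.sum_le_sum (fun i _ => key i)
    _ = ∫ θ in Set.Ioc 0 β, ∑ i : Fin k, (A i).indicator (fun _ => D i) θ :=
        (integral_finset_sum _ (fun i _ => hint i)).symm
    _ = ∫ θ in Set.Ioc 0 β, ∑ i : Fin k,
        (if USep ep1 ep2 (uvcut ep1 ep2 (Finset.univ.filter (fun u => g u ≤ θ)))
          (s i) (t i) then D i else 0) := by
        exact integral_congr_ae (Filter.Eventually.of_forall fun θ => (hfun θ).symm)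
end
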